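/- arXiv:1510.05831 — 6 statements merged into one kernel-verified Lean document; each statement's English description precedes it below -/
import Mathlib

section
/- The spectrum of A equals K; that is, σ(A) = {z ∈ ℂ : |z − 1| ≤ 1/2}. -/
noncomputable section

open Metric

/-- The closed disk of radius 1/2 centered at 1 in ℂ. -/
def K : Set ℂ := Metric.closedBall 1 (1/2)

instance : CompactSpace K :=
  isCompact_iff_compactSpace.mp (isCompact_closedBall 1 (1/2))

open scoped Classical in
/-- Extension of a continuous function on K to ℂ by 0. -/
def extendFn (f : C(K, ℂ)) : ℂ → ℂ := fun z => if h : z ∈ K then f ⟨z, h⟩ else 0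

/-- The subspace of C(K, ℂ) of functions holomorphic on the interior of K. -/
def Esub : Submodule ℂ C(K, ℂ) where
  carrier := {f | DifferentiableOn ℂ (extendFn f) (interior K)}
  add_mem' := by
    intro f g hf hg
    have h : extendFn (f + g) = extendFn f + extendFn g := by
      funext z; by_cases h : z ∈ K <;> simp [extendFn, h]
    simpa [Set.mem_setOf_eq, h] using hf.add hg
  zero_mem' := by
    have h : extendFn (0 : C(K, ℂ)) = fun _ => 0 := by
      funext z; by_cases h : z ∈ K <;> simp [extendFn, h]
    simpa [Set.mem_setOf_eq, h] using differentiableOn_const (0 : ℂ)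
  smul_mem' := by
    intro c f hf
    have h : extendFn (c • f) = c • extendFn f := by
      funext z; by_cases h : z ∈ K <;> simp [extendFn, h]
    simpa [Set.mem_setOf_eq, h] using hf.const_smul c

/-- The Banach space E. -/
abbrev E : Type := ↥Esub

/-- The constant function 1 as an element of E. -/
def oneE : E :=
  ⟨1, by
    have h : ∀ z ∈ interior K, extendFn (1 : C(K, ℂ)) z = 1 := by
      intro z hz; simp [extendFn, interior_subset hz]
    exact (differentiableOn_const (1 : ℂ)).congr h⟩

set_option maxHeartbeats 1000000 in
set_option synthInstance.maxHeartbeats 400000 in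
/-- The spectrum of A equals K. -/
theorem spectrum_eq_K (A : E →L[ℂ] E)
    (hA : ∀ (f : E) (z : K), ((A f : C(K, ℂ)) z) = (z : ℂ) * ((f : C(K, ℂ)) z)) :
    spectrum ℂ A = K := by
  apply Set.eq_of_subset_of_subset
  · -- σ(A) ⊆ K : if lam ∉ K, build explicit inverse (multiplication by (lam - z)⁻¹)
    intro lam hlam
    by_contra hK
    have hd : ∀ z : K, lam - (z : ℂ) ≠ 0 := by
      intro z hz0
      exact hK (by rw [sub_eq_zero] at hz0; rw [hz0]; exact z.2)
    let m : C(K, ℂ) := ⟨fun z => (lam - (z : ℂ))⁻¹,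
      (continuous_const.sub continuous_subtype_val).inv₀ hd⟩
    have hmem : ∀ f : E, m * (f : C(K, ℂ)) ∈ Esub := by
      intro f
      have hf : DifferentiableOn ℂ (extendFn (f : C(K, ℂ))) (interior K) := f.2
      show DifferentiableOn ℂ (extendFn (m * (f : C(K, ℂ)))) (interior K)
      have heq : ∀ w ∈ interior K,
          extendFn (m * (f : C(K, ℂ))) w = (lam - w)⁻¹ * extendFn (f : C(K, ℂ)) w := by
        intro w hw
        have hwK := interior_subset hw
        simp [extendFn, hwK, m]
      apply DifferentiableOn.congr _ heq
      exact (((differentiableOn_const lam).sub differentiableOn_id).inv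
        (fun w hw => hd ⟨w, interior_subset hw⟩)).mul hf
    let L : E →ₗ[ℂ] E :=
      { toFun := fun f => ⟨m * (f : C(K, ℂ)), hmem f⟩
        map_add' := by intro f g; apply Subtype.ext; simp [mul_add]
        map_smul' := by intro c f; apply Subtype.ext; simp [mul_smul_comm] }
    let B : E →L[ℂ] E := L.mkContinuous ‖m‖ (by
      intro f
      show ‖m * (f : C(K, ℂ))‖ ≤ ‖m‖ * ‖(f : C(K, ℂ))‖
      exact norm_mul_le m (f : C(K, ℂ)))
    have hBf : ∀ (f : E) (z : K), ((B f : C(K, ℂ)) z) = (lam - (z : ℂ))⁻¹ * ((f : C(K, ℂ)) z) := by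
      intro f z; rfl
    have hsub : ∀ (g : E) (z : K),
        ((((@algebraMap ℂ (E →L[ℂ] E) _ _ ContinuousLinearMap.algebra lam - A) g : E) : C(K, ℂ)) z)
          = (lam - (z : ℂ)) * ((g : C(K, ℂ)) z) := by
      intro g z
      have h1 : ((@algebraMap ℂ (E →L[ℂ] E) _ _ ContinuousLinearMap.algebra lam - A) g) = lam • g - A g := by
        simp [Algebra.algebraMap_eq_smul_one]
      rw [h1]
      have h2 : ((lam • g - A g : E) : C(K, ℂ)) = lam • (g : C(K, ℂ)) - (A g : C(K, ℂ)) := rfl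
      rw [h2]
      simp [hA g z]
      ring
    have h1 : (@algebraMap ℂ (E →L[ℂ] E) _ _ ContinuousLinearMap.algebra lam - A) * B = 1 := by
      apply ContinuousLinearMap.ext; intro f
      apply Subtype.ext; apply ContinuousMap.ext; intro z
      have := hsub (B f) z
      rw [ContinuousLinearMap.mul_apply, ContinuousLinearMap.one_apply]
      show ((((@algebraMap ℂ (E →L[ℂ] E) _ _ ContinuousLinearMap.algebra lam - A) (B f) : E) : C(K, ℂ)) z) = ((f : C(K, ℂ)) z)
      rw [this, hBf f z]
      field_simp
      exact mul_div_cancel_left₀ _ (hd z)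
    have h2 : B * (@algebraMap ℂ (E →L[ℂ] E) _ _ ContinuousLinearMap.algebra lam - A) = 1 := by
      apply ContinuousLinearMap.ext; intro f
      apply Subtype.ext; apply ContinuousMap.ext; intro z
      rw [ContinuousLinearMap.mul_apply, ContinuousLinearMap.one_apply]
      show ((B ((@algebraMap ℂ (E →L[ℂ] E) _ _ ContinuousLinearMap.algebra lam - A) f) : C(K, ℂ)) z) = ((f : C(K, ℂ)) z)
      rw [hBf _ z, hsub f z]
      field_simp
      exact mul_div_cancel_left₀ _ (hd z)
    exact (spectrum.mem_iff.mp hlam) ⟨⟨_, B, h1, h2⟩, rfl⟩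
  · -- K ⊆ σ(A)
    intro lam hlam
    by_contra hcon
    rw [spectrum.notMem_iff] at hcon
    set u := hcon.unit with hu
    set g : E := u.inv oneE with hg
    have hug : (@algebraMap ℂ (E →L[ℂ] E) _ _ ContinuousLinearMap.algebra lam - A) g = oneE := by
      have : u.val (u.inv oneE) = oneE := by
        calc u.val (u.inv oneE) = (u.val * u.inv) oneE :=
              (ContinuousLinearMap.mul_apply u.val u.inv oneE).symm
          _ = oneE := by rw [u.val_inv]; exact ContinuousLinearMap.one_apply oneE
      rw [hg, ← hcon.unit_spec]
      exact this
    have heval := congrArg (fun (f : E) => ((f : C(K, ℂ)) ⟨lam, hlam⟩)) hug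
    have hlhs : (((@algebraMap ℂ (E →L[ℂ] E) _ _ ContinuousLinearMap.algebra lam - A) g : E) : C(K, ℂ)) ⟨lam, hlam⟩ = 0 := by
      have h1 : ((@algebraMap ℂ (E →L[ℂ] E) _ _ ContinuousLinearMap.algebra lam - A) g) = lam • g - A g := by
        simp [Algebra.algebraMap_eq_smul_one]
      rw [h1]
      have h2 : ((lam • g - A g : E) : C(K, ℂ)) = lam • (g : C(K, ℂ)) - (A g : C(K, ℂ)) := rfl
      rw [h2]
      have h3 := hA g ⟨lam, hlam⟩
      simp [h3]
    have hrhs : ((oneE : E) : C(K, ℂ)) ⟨lam, hlam⟩ = 1 := rfl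
    rw [hlhs, hrhs] at heval
    exact zero_ne_one heval
end
end

section
/- For every f ∈ E one has ‖f − Af‖ = (1/2)·‖f‖, where ‖·‖ is the supremum norm. (By the Maximum Modulus Principle the supremum of |(1 − z)f(z)| over K is attained on the boundary circle S = {z : |z − 1| = 1/2}, where |1 − z| = 1/2 is constant.) -/
noncomputable section

open Metric

lemma extendFn_eq (f : C(K, ℂ)) {z : ℂ} (hz : z ∈ K) : extendFn f z = f ⟨z, hz⟩ := by
  simp [extendFn, hz]

lemma closure_interior_K : closure (interior K) = K := by
  rw [show K = Metric.closedBall 1 (1/2) from rfl, interior_closedBall 1 (by norm_num),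
    closure_ball 1 (by norm_num)]

lemma contOn_extendFn (f : C(K, ℂ)) : ContinuousOn (extendFn f) K := by
  rw [show K = Metric.closedBall 1 (1/2) from rfl, continuousOn_iff_continuous_restrict]
  have : (Metric.closedBall (1:ℂ) (1/2)).domRestrict (extendFn f) = f := by
    funext x; exact extendFn_eq f x.2
  rw [this]; exact f.continuous

/-- For every f ∈ E, ‖f − Af‖ = (1/2)·‖f‖. -/
theorem norm_sub_mul_eq_half (A : E →L[ℂ] E)
    (hA : ∀ (f : E) (z : K), ((A f : C(K, ℂ)) z) = (z : ℂ) * ((f : C(K, ℂ)) z)) :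
    ∀ f : E, ‖f - A f‖ = (1/2) * ‖f‖ := by
  intro f
  have hval : ∀ z : K, ((f - A f : E) : C(K, ℂ)) z = (1 - (z : ℂ)) * (f : C(K, ℂ)) z := by
    intro z
    have : ((f - A f : E) : C(K, ℂ)) z = (f : C(K, ℂ)) z - ((A f : E) : C(K, ℂ)) z := rfl
    rw [this, hA f z]; ring
  have hdist : ∀ z : K, ‖1 - (z : ℂ)‖ ≤ 1/2 := by
    intro z
    have hz : (z : ℂ) ∈ Metric.closedBall (1:ℂ) (1/2) := z.2
    rw [Metric.mem_closedBall] at hz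
    calc ‖1 - (z : ℂ)‖ = dist (z : ℂ) 1 := by rw [dist_eq_norm, norm_sub_rev]
    _ ≤ 1/2 := hz
  -- upper bound
  have hub : ‖f - A f‖ ≤ 1/2 * ‖f‖ := by
    have : ‖((f - A f : E) : C(K, ℂ))‖ ≤ 1/2 * ‖(f : C(K, ℂ))‖ := by
      refine ContinuousMap.norm_le _ (by positivity) |>.mpr fun z => ?_
      rw [hval z, norm_mul]
      exact mul_le_mul (hdist z) (ContinuousMap.norm_coe_le_norm _ z) (norm_nonneg _)
        (by norm_num)
    exact this
  -- lower bound via maximum modulus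
  have hne : (interior K).Nonempty := by
    rw [show K = Metric.closedBall 1 (1/2) from rfl, interior_closedBall 1 (by norm_num)]
    exact ⟨1, by simp⟩
  have hb : Bornology.IsBounded (interior K) :=
    (Metric.isBounded_closedBall (x := (1:ℂ)) (r := 1/2)).subset interior_subset
  have hd : DiffContOnCl ℂ (extendFn (f : C(K, ℂ))) (interior K) :=
    ⟨f.2, by rw [closure_interior_K]; exact contOn_extendFn _⟩
  obtain ⟨z0, hz0f, hmax⟩ := Complex.exists_mem_frontier_isMaxOn_norm hb hne hd
  have hz0s : z0 ∈ Metric.sphere (1:ℂ) (1/2) := by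
    rwa [show K = Metric.closedBall 1 (1/2) from rfl, interior_closedBall 1 (by norm_num),
      frontier_ball 1 (by norm_num)] at hz0f
  have hz0K : z0 ∈ K := Metric.sphere_subset_closedBall hz0s
  have hnorm1 : ‖1 - z0‖ = 1/2 := by
    rw [Metric.mem_sphere] at hz0s
    rw [norm_sub_rev, ← dist_eq_norm]; exact hz0s
  -- ‖f‖ ≤ ‖f z0‖
  have hfle : ‖(f : C(K, ℂ))‖ ≤ ‖(f : C(K, ℂ)) ⟨z0, hz0K⟩‖ := by
    refine ContinuousMap.norm_le _ (norm_nonneg _) |>.mpr fun z => ?_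
    have hzc : (z : ℂ) ∈ closure (interior K) := by rw [closure_interior_K]; exact z.2
    have := hmax hzc
    simpa [Function.comp, extendFn_eq _ z.2, extendFn_eq _ hz0K] using this
  have hlb : 1/2 * ‖f‖ ≤ ‖f - A f‖ := by
    calc 1/2 * ‖f‖ ≤ 1/2 * ‖(f : C(K, ℂ)) ⟨z0, hz0K⟩‖ := by
          have : ‖f‖ = ‖(f : C(K, ℂ))‖ := rfl
          rw [this]; linarith
    _ = ‖((f - A f : E) : C(K, ℂ)) ⟨z0, hz0K⟩‖ := by
          rw [hval ⟨z0, hz0K⟩, norm_mul, hnorm1]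
    _ ≤ ‖((f - A f : E) : C(K, ℂ))‖ := ContinuousMap.norm_coe_le_norm _ _
    _ = ‖f - A f‖ := rfl
  linarith
end
end

section
/- Let ε > 0 and let B be a bounded linear operator on E with ‖A − B‖ ≤ ε. Then for every f ∈ E one has ‖(A − B)f‖ ≤ 2ε·‖f − Af‖. -/
noncomputable section

open Metric

/-- If ‖A − B‖ ≤ ε then ‖(A − B)f‖ ≤ 2ε·‖f − Af‖ for every f ∈ E. -/
theorem perturbation_bound (A : E →L[ℂ] E)
    (hA : ∀ (f : E) (z : K), ((A f : C(K, ℂ)) z) = (z : ℂ) * ((f : C(K, ℂ)) z))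
    (ε : ℝ) (hε : 0 < ε) (B : E →L[ℂ] E) (hB : ‖A - B‖ ≤ ε) :
    ∀ f : E, ‖(A - B) f‖ ≤ 2 * ε * ‖f - A f‖ := by
  intro f
  set g := f - A f with hgdef
  -- pointwise formula for g
  have hgz : ∀ z : K, ((g : C(K, ℂ)) z) = (1 - (z : ℂ)) * ((f : C(K, ℂ)) z) := by
    intro z
    have : ((g : C(K, ℂ)) z) = ((f : C(K, ℂ)) z) - ((A f : C(K, ℂ)) z) := by
      simp [hgdef]
    rw [this, hA, sub_mul, one_mul]
  have hr : (1/2 : ℝ) ≠ 0 := by norm_num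
  have hint : interior K = Metric.ball (1 : ℂ) (1/2) := by
    rw [K]; exact interior_closedBall (1 : ℂ) hr
  have hclos : closure (Metric.ball (1 : ℂ) (1/2)) = K := by
    rw [K]; exact closure_ball (1 : ℂ) hr
  have hcont : ContinuousOn (extendFn (f : C(K, ℂ))) K := by
    rw [continuousOn_iff_continuous_restrict]
    have : Set.restrict K (extendFn (f : C(K, ℂ))) = (f : C(K, ℂ)) := by
      funext z
      simp [Set.restrict, extendFn, z.2]
    change Continuous (Set.restrict K (extendFn (f : C(K, ℂ))))
    rw [this]
    exact (f : C(K, ℂ)).continuous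
  -- key estimate: ‖f‖ ≤ 2‖g‖
  have key : ‖f‖ ≤ 2 * ‖g‖ := by
    have h2g : (0 : ℝ) ≤ 2 * ‖g‖ := by positivity
    have : ∀ z : K, ‖(f : C(K, ℂ)) z‖ ≤ 2 * ‖g‖ := by
      intro z
      have hz : (z : ℂ) ∈ closure (Metric.ball (1 : ℂ) (1/2)) := by
        rw [hclos]; exact z.2
      have hF : ‖extendFn (f : C(K, ℂ)) (z : ℂ)‖ ≤ 2 * ‖g‖ := by
        apply Complex.norm_le_of_forall_mem_frontier_norm_le
          (Metric.isBounded_ball)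
        · refine ⟨?_, ?_⟩
          · have hdf : DifferentiableOn ℂ (extendFn (f : C(K, ℂ))) (interior K) := f.2
            rw [hint] at hdf
            exact hdf
          · rw [hclos]; exact hcont
        · intro w hw
          rw [frontier_ball (1 : ℂ) hr] at hw
          have hwK : w ∈ K := Metric.sphere_subset_closedBall hw
          have hwd : ‖w - 1‖ = 1/2 := by
            simpa [Metric.mem_sphere, dist_eq_norm] using hw
          have h1w : ‖(1 : ℂ) - w‖ = 1/2 := by rw [norm_sub_rev]; exact hwd
          have hev : extendFn (f : C(K, ℂ)) w = (f : C(K, ℂ)) ⟨w, hwK⟩ := by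
            simp [extendFn, hwK]
          rw [hev]
          have hgw : ‖(g : C(K, ℂ)) ⟨w, hwK⟩‖ ≤ ‖g‖ :=
            ContinuousMap.norm_coe_le_norm (g : C(K, ℂ)) ⟨w, hwK⟩
          have := hgz ⟨w, hwK⟩
          rw [this] at hgw
          rw [norm_mul, h1w] at hgw
          linarith
        · exact hz
      have hev : extendFn (f : C(K, ℂ)) (z : ℂ) = (f : C(K, ℂ)) z := by
        simp [extendFn, z.2]
      rwa [hev] at hF
    have : ‖(f : C(K, ℂ))‖ ≤ 2 * ‖g‖ := (ContinuousMap.norm_le _ h2g).mpr this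
    exact this
  calc ‖(A - B) f‖ ≤ ‖A - B‖ * ‖f‖ := (A - B).le_opNorm f
    _ ≤ ε * (2 * ‖g‖) :=
        mul_le_mul hB key (norm_nonneg f) hε.le
    _ = 2 * ε * ‖g‖ := by ring
end
end

section
/- Let B be a bounded linear operator on E with ‖A − B‖ < 1/4. Then there is no f ∈ E satisfying f − Bf = 1 (the constant function equal to 1 on K); in particular the operator I − B is not surjective. -/
noncomputable section

set_option maxHeartbeats 1000000

open Metric

/-- If ‖A − B‖ < 1/4, then the equation f − Bf = 1 has no solution f ∈ E;
in particular I − B is not surjective. -/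
theorem id_sub_B_not_surjective (A : E →L[ℂ] E)
    (hA : ∀ (f : E) (z : K), ((A f : C(K, ℂ)) z) = (z : ℂ) * ((f : C(K, ℂ)) z))
    (B : E →L[ℂ] E) (hB : ‖A - B‖ < 1/4) :
    (¬ ∃ f : E, f - B f = oneE) ∧
    ¬ Function.Surjective ⇑((1 : E →L[ℂ] E) - B) := by
  have hnormE : ∀ x : E, ‖x‖ = ‖(x : C(K,ℂ))‖ := fun x => Submodule.coe_norm x
  have key : ¬ ∃ f : E, f - B f = oneE := by
    rintro ⟨f, hf⟩
    have ha0 : (0:ℝ) ≤ ‖A - B‖ := ContinuousLinearMap.opNorm_nonneg _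
    have hnf0 : (0:ℝ) ≤ ‖f‖ := norm_nonneg _
    set h : E := A f - B f with hh
    -- bound on ‖h‖
    have hhnorm : ‖h‖ ≤ ‖A - B‖ * ‖f‖ := by
      have he : h = (A - B) f := by simp [hh]
      rw [he]
      exact (A - B).le_opNorm f
    rw [hnormE] at hhnorm
    -- pointwise identity
    have hpt : ∀ z : K, (1 - (z:ℂ)) * ((f : C(K,ℂ)) z) = 1 - ((h : C(K,ℂ)) z) := by
      intro z
      have h1 : ((f : C(K,ℂ)) z) - ((B f : C(K,ℂ)) z) = 1 := by
        have := congrArg (fun g : E => (g : C(K,ℂ)) z) hf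
        simpa [oneE] using this
      have h2 := hA f z
      have h3 : ((h : C(K,ℂ)) z) = ((A f : C(K,ℂ)) z) - ((B f : C(K,ℂ)) z) := by
        simp [hh]
      linear_combination h1 + h2 + h3
    -- value at 1
    have h1K : (1:ℂ) ∈ K := by simp [K]
    have hz1 : ((h : C(K,ℂ)) ⟨1, h1K⟩) = 1 := by
      have h0 := hpt ⟨1, h1K⟩
      have hcoe : ((⟨1, h1K⟩ : K) : ℂ) = 1 := rfl
      rw [hcoe] at h0
      linear_combination h0
    have hub : (1:ℝ) ≤ ‖A - B‖ * ‖f‖ := by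
      calc (1:ℝ) = ‖((h : C(K,ℂ)) ⟨1, h1K⟩)‖ := by rw [hz1]; simp
        _ ≤ ‖(h : C(K,ℂ))‖ := ContinuousMap.norm_coe_le_norm _ _
        _ ≤ ‖A - B‖ * ‖f‖ := hhnorm
    -- maximum modulus bound
    set C : ℝ := 2 + 2 * (‖A - B‖ * ‖f‖) with hC
    have hC0 : (0:ℝ) ≤ C := by positivity
    have hball : interior K = ball (1:ℂ) (1/2) := by
      rw [K, interior_closedBall] <;> norm_num
    have hclos : closure (ball (1:ℂ) (1/2)) = K := by
      rw [K, closure_ball] <;> norm_num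
    have hcont : ContinuousOn (extendFn (f : C(K,ℂ))) K := by
      rw [continuousOn_iff_continuous_restrict]
      have : K.restrict (extendFn (f : C(K,ℂ))) = (f : C(K,ℂ)) := by
        funext z
        simp [Set.restrict, extendFn, z.2]
      show Continuous (K.restrict (extendFn (f : C(K,ℂ))))
      rw [this]
      exact (f : C(K,ℂ)).continuous
    have hdiff : DifferentiableOn ℂ (extendFn (f : C(K,ℂ))) (interior K) := f.2
    have hdcl : DiffContOnCl ℂ (extendFn (f : C(K,ℂ))) (ball (1:ℂ) (1/2)) := by
      refine ⟨by rwa [hball] at hdiff, ?_⟩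
      rwa [hclos]
    have hfr : ∀ z ∈ frontier (ball (1:ℂ) (1/2)), ‖extendFn (f : C(K,ℂ)) z‖ ≤ C := by
      intro z hz
      rw [frontier_ball _ (by norm_num : (1/2:ℝ) ≠ 0)] at hz
      have hzK : z ∈ K := sphere_subset_closedBall hz
      have hdist : ‖(1:ℂ) - z‖ = 1/2 := by
        rw [mem_sphere_iff_norm] at hz
        rw [← hz]; rw [norm_sub_rev]
      have heq := hpt ⟨z, hzK⟩
      have hble : ‖((h : C(K,ℂ)) ⟨z, hzK⟩)‖ ≤ ‖A - B‖ * ‖f‖ :=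
        (ContinuousMap.norm_coe_le_norm (h : C(K,ℂ)) ⟨z, hzK⟩).trans hhnorm
      have hbnd : ‖(1:ℂ) - ((h : C(K,ℂ)) ⟨z, hzK⟩)‖ ≤ 1 + ‖A - B‖ * ‖f‖ := by
        calc ‖(1:ℂ) - ((h : C(K,ℂ)) ⟨z, hzK⟩)‖
            ≤ ‖(1:ℂ)‖ + ‖((h : C(K,ℂ)) ⟨z, hzK⟩)‖ := norm_sub_le _ _
          _ ≤ 1 + ‖A - B‖ * ‖f‖ := by rw [norm_one]; linarith
      have hval : extendFn (f : C(K,ℂ)) z = (f : C(K,ℂ)) ⟨z, hzK⟩ := by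
        simp [extendFn, hzK]
      rw [hval]
      have hcoe : ((⟨z, hzK⟩ : K) : ℂ) = z := rfl
      have hnorm : (1/2 : ℝ) * ‖(f : C(K,ℂ)) ⟨z, hzK⟩‖
          = ‖(1:ℂ) - ((h : C(K,ℂ)) ⟨z, hzK⟩)‖ := by
        rw [← heq, norm_mul, hcoe, hdist]
      rw [hC]
      nlinarith [norm_nonneg ((f : C(K,ℂ)) ⟨z, hzK⟩)]
    have hmax : ∀ z : K, ‖(f : C(K,ℂ)) z‖ ≤ C := by
      intro z
      have hzc : (z:ℂ) ∈ closure (ball (1:ℂ) (1/2)) := by rw [hclos]; exact z.2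
      have hle := Complex.norm_le_of_forall_mem_frontier_norm_le isBounded_ball hdcl hfr hzc
      have hval : extendFn (f : C(K,ℂ)) (z:ℂ) = (f : C(K,ℂ)) z := by
        simp [extendFn, z.2]
      rwa [hval] at hle
    have hfle : ‖f‖ ≤ C := by
      rw [hnormE]
      exact (ContinuousMap.norm_le _ hC0).mpr hmax
    rw [hC] at hfle
    nlinarith
  refine ⟨key, ?_⟩
  intro hsurj
  obtain ⟨f, hf⟩ := hsurj oneE
  exact key ⟨f, by simpa [ContinuousLinearMap.sub_apply] using hf⟩
end
end

section
/- Every invertible bounded linear operator B on E with ‖A − B‖ < 1/4 fails to be hyperbolic: its spectrum contains the point 1, which lies on the unit circle. -/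
noncomputable section

open Metric

/-- An invertible bounded operator is hyperbolic if its spectrum is disjoint
from the unit circle. -/
def Hyperbolic (T : E →L[ℂ] E) : Prop :=
  Disjoint (spectrum ℂ T) {z : ℂ | ‖z‖ = 1}
set_option maxHeartbeats 1000000 in

/-- Every invertible bounded operator B with ‖A − B‖ < 1/4 fails to be hyperbolic:
its spectrum contains 1, which lies on the unit circle. -/
theorem close_operators_not_hyperbolic (A : E →L[ℂ] E)
    (hA : ∀ (f : E) (z : K), ((A f : C(K, ℂ)) z) = (z : ℂ) * ((f : C(K, ℂ)) z))
    (B : E →L[ℂ] E) (hBu : IsUnit B) (hB : ‖A - B‖ < 1/4) :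
    (1 : ℂ) ∈ spectrum ℂ B ∧ ‖(1 : ℂ)‖ = 1 ∧ ¬ Hyperbolic B := by
  have hK1 : (1:ℂ) ∈ K := by
    rw [K]; exact Metric.mem_closedBall_self (by norm_num)
  haveI : Nonempty K := ⟨⟨1, hK1⟩⟩
  -- pointwise formula for (1 - A) f
  have hS : ∀ (f : E) (z : K),
      ((((1 : E →L[ℂ] E) - A) f : C(K, ℂ)) z) = (1 - (z:ℂ)) * ((f : C(K, ℂ)) z) := by
    intro f z
    have h1 : ((((1 : E →L[ℂ] E) - A) f : C(K, ℂ)) z)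
        = ((f : C(K, ℂ)) z) - ((A f : C(K, ℂ)) z) := by
      simp [ContinuousLinearMap.sub_apply]
    rw [h1, hA]; ring
  -- the key lower bound from the maximum modulus principle
  have key : ∀ f : E, ‖f‖ ≤ 2 * ‖((1 : E →L[ℂ] E) - A) f‖ := by
    intro f
    set g : E := ((1 : E →L[ℂ] E) - A) f with hg
    have hC0 : (0:ℝ) ≤ 2 * ‖g‖ := by positivity
    have hball : interior K = Metric.ball (1:ℂ) (1/2) := by
      rw [K]; exact interior_closedBall 1 (by norm_num)
    have hclos : closure (Metric.ball (1:ℂ) (1/2)) = K := by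
      rw [K]; exact closure_ball 1 (by norm_num)
    have hcont : ContinuousOn (extendFn (f : C(K,ℂ))) K := by
      rw [continuousOn_iff_continuous_restrict]
      have hres : Set.restrict K (extendFn (f : C(K,ℂ))) = fun z : K => (f : C(K,ℂ)) z := by
        funext z; simp [Set.restrict, extendFn, z.2]
      exact (hres ▸ (f : C(K,ℂ)).continuous : Continuous (Set.restrict K (extendFn (f : C(K,ℂ)))))
    have hdc : DiffContOnCl ℂ (extendFn (f : C(K,ℂ))) (Metric.ball (1:ℂ) (1/2)) := by
      refine ⟨?_, ?_⟩
      · rw [← hball]; exact f.2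
      · rw [hclos]; exact hcont
    have hfr : ∀ z ∈ frontier (Metric.ball (1:ℂ) (1/2)),
        ‖extendFn (f : C(K,ℂ)) z‖ ≤ 2 * ‖g‖ := by
      intro z hz
      rw [frontier_ball 1 (by norm_num)] at hz
      have hzK : z ∈ K := sphere_subset_closedBall hz
      have hz1 : ‖(1:ℂ) - z‖ = 1/2 := by
        have h := mem_sphere_iff_norm.mp hz
        rw [← norm_neg]; simpa [neg_sub] using h
      have hgz := hS f ⟨z, hzK⟩
      have heF : extendFn (f : C(K,ℂ)) z = (f : C(K,ℂ)) ⟨z, hzK⟩ := by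
        simp [extendFn, hzK]
      have hle : ‖(g : C(K,ℂ)) ⟨z, hzK⟩‖ ≤ ‖g‖ :=
        ContinuousMap.norm_coe_le_norm (g : C(K,ℂ)) ⟨z, hzK⟩
      have hhalf : (1/2 : ℝ) * ‖(f : C(K,ℂ)) ⟨z, hzK⟩‖ ≤ ‖g‖ := by
        calc (1/2:ℝ) * ‖(f:C(K,ℂ)) ⟨z,hzK⟩‖
            = ‖((1:ℂ) - z) * (f:C(K,ℂ)) ⟨z,hzK⟩‖ := by rw [norm_mul, hz1]
          _ = ‖(g : C(K,ℂ)) ⟨z,hzK⟩‖ := by rw [hgz]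
          _ ≤ ‖g‖ := hle
      rw [heF]; linarith
    have hmax : ∀ w : K, ‖(f : C(K,ℂ)) w‖ ≤ 2 * ‖g‖ := by
      intro w
      have hw : (w:ℂ) ∈ closure (Metric.ball (1:ℂ) (1/2)) := by rw [hclos]; exact w.2
      have h := Complex.norm_le_of_forall_mem_frontier_norm_le
        Metric.isBounded_ball hdc hfr hw
      have heF : extendFn (f:C(K,ℂ)) (w:ℂ) = (f:C(K,ℂ)) w := by
        simp [extendFn, w.2]
      rwa [heF] at h
    calc ‖f‖ = ‖(f : C(K,ℂ))‖ := rfl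
      _ ≤ 2 * ‖g‖ := (ContinuousMap.norm_le _ hC0).mpr hmax
  -- 1 - B is not a unit
  have hnotunit : ¬ IsUnit ((1 : E →L[ℂ] E) - B) := by
    intro h
    obtain ⟨u, hu⟩ := h
    set f : E := (↑u⁻¹ : E →L[ℂ] E) oneE with hf
    have hTf : ((1 : E →L[ℂ] E) - B) f = oneE := by
      have h1 : (↑u : E →L[ℂ] E) * (↑u⁻¹ : E →L[ℂ] E) = 1 := u.mul_inv
      calc ((1 : E →L[ℂ] E) - B) f = ((↑u : E →L[ℂ] E) * (↑u⁻¹ : E →L[ℂ] E)) oneE := by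
            rw [hu]; rfl
        _ = oneE := by rw [h1]; rfl
    have hone : ‖oneE‖ = 1 :=
      calc ‖oneE‖ = ‖(oneE : C(K,ℂ))‖ := rfl
        _ = ‖(1 : C(K,ℂ))‖ := rfl
        _ = 1 := norm_one
    set S : E →L[ℂ] E := (1 : E →L[ℂ] E) - A with hSdef
    set T : E →L[ℂ] E := (1 : E →L[ℂ] E) - B with hTdef
    have hST : ‖S - T‖ = ‖A - B‖ := by
      have h : S - T = B - A := by rw [hSdef, hTdef]; exact sub_sub_sub_cancel_left A B 1
      rw [h]; exact norm_sub_rev B A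
    have hSTlt : ‖S - T‖ < 1/4 := by rw [hST]; exact hB
    -- bound on ‖f‖
    have hSf : ‖S f‖ ≤ 1 + ‖S - T‖ * ‖f‖ := by
      have hadd : T f + (S - T) f = S f := by
        rw [ContinuousLinearMap.sub_apply S T f]; abel
      calc ‖S f‖ = ‖T f + (S - T) f‖ := by rw [hadd]
        _ ≤ ‖T f‖ + ‖(S - T) f‖ := norm_add_le _ _
        _ ≤ 1 + ‖S - T‖ * ‖f‖ := by
            rw [hTf, hone]
            exact add_le_add (le_refl 1) ((S - T).le_opNorm f)
    have hf4 : ‖f‖ ≤ 4 := by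
      have h1 : ‖f‖ ≤ 2 * ‖S f‖ := key f
      have hm : ‖S - T‖ * ‖f‖ ≤ (1/4) * ‖f‖ :=
        mul_le_mul_of_nonneg_right hSTlt.le (norm_nonneg f)
      linarith
    -- evaluate at z = 1
    have hp : ((S f : C(K,ℂ)) ⟨1, hK1⟩) = 0 := by
      rw [hS f ⟨1, hK1⟩]; simp
    have hSTf : (((S - T) f : C(K,ℂ)) ⟨1, hK1⟩) = -1 := by
      have h1 : ((S - T) f) = S f - T f := ContinuousLinearMap.sub_apply S T f
      have h2 : (((S - T) f : C(K,ℂ)) ⟨1, hK1⟩)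
          = ((S f : C(K,ℂ)) ⟨1, hK1⟩) - ((T f : C(K,ℂ)) ⟨1, hK1⟩) := by
        rw [h1]; simp
      rw [h2, hp, hTf]
      show (0:ℂ) - ((1 : C(K,ℂ)) ⟨1, hK1⟩) = -1
      simp
    have hge : (1:ℝ) ≤ ‖S - T‖ * ‖f‖ := by
      have h1 : ‖(((S - T) f : C(K,ℂ)) ⟨1, hK1⟩)‖ ≤ ‖(S - T) f‖ :=
        ContinuousMap.norm_coe_le_norm _ _
      have h2 : ‖(S - T) f‖ ≤ ‖S - T‖ * ‖f‖ := (S - T).le_opNorm f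
      rw [hSTf] at h1
      rw [norm_neg, norm_one] at h1
      linarith
    have h0 : (0:ℝ) ≤ ‖S - T‖ := ContinuousLinearMap.opNorm_nonneg (S - T)
    have hx : ‖S - T‖ * ‖f‖ ≤ ‖S - T‖ * 4 :=
      mul_le_mul_of_nonneg_left hf4 h0
    linarith
  have hmem : (1 : ℂ) ∈ spectrum ℂ B := by
    rw [spectrum.mem_iff]
    simpa using hnotunit
  refine ⟨hmem, by simp, ?_⟩
  intro hhyp
  have := Set.disjoint_left.mp hhyp hmem
  exact this (by simp)
end
end

section
/- The set H(E) of hyperbolic invertible bounded linear operators on E is not dense (in the operator-norm topology) in the set GL(E) of invertible bounded linear operators on E: there exist an invertible bounded operator A₀ on E and ε > 0 such that no hyperbolic invertible bounded operator B satisfies ‖A₀ − B‖ < ε. (One may take A₀ = A, the multiplication operator (Af)(z) = z·f(z), and ε = 1/4.) -/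
noncomputable section

open Metric

/- ### Auxiliary material -/

lemma one_mem_K : (1:ℂ) ∈ K := mem_closedBall_self (by norm_num)

instance : Nonempty K := ⟨⟨1, one_mem_K⟩⟩

lemma ne_zero_of_mem_K {z : ℂ} (hz : z ∈ K) : z ≠ 0 := by
  intro h
  subst h
  have : dist (0:ℂ) 1 ≤ 1/2 := hz
  rw [Complex.dist_eq] at this
  simp at this
  norm_num at this

lemma extendFn_apply (f : C(K,ℂ)) {z : ℂ} (hz : z ∈ K) : extendFn f z = f ⟨z, hz⟩ :=
  dif_pos hz

lemma norm_coe_E (x : Esub) : ‖x‖ = ‖(x : C(K,ℂ))‖ := rfl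

/-- Multiplication by a function holomorphic on the interior preserves `Esub`. -/
lemma mul_mem_Esub {g f : C(K,ℂ)} (hg : DifferentiableOn ℂ (extendFn g) (interior K))
    (hf : f ∈ Esub) : g * f ∈ Esub := by
  have hf' : DifferentiableOn ℂ (extendFn f) (interior K) := hf
  have : ∀ z ∈ interior K, extendFn (g * f) z = extendFn g z * extendFn f z := by
    intro z hz
    have hzK : z ∈ K := interior_subset hz
    rw [extendFn_apply _ hzK, extendFn_apply _ hzK, extendFn_apply _ hzK]
    rfl
  exact (hg.mul hf').congr this

/-- The identity function as a continuous map on `K`. -/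
def zeta : C(K, ℂ) := ⟨fun z => (z:ℂ), continuous_subtype_val⟩

lemma zeta_diff : DifferentiableOn ℂ (extendFn zeta) (interior K) := by
  refine differentiableOn_id.congr ?_
  intro z hz
  rw [extendFn_apply _ (interior_subset hz)]
  rfl

/-- The reciprocal function as a continuous map on `K`. -/
def iotaC : C(K, ℂ) :=
  ⟨fun z => (z:ℂ)⁻¹, (continuous_subtype_val.inv₀ (fun z => ne_zero_of_mem_K z.2))⟩

lemma iota_diff : DifferentiableOn ℂ (extendFn iotaC) (interior K) := by
  have h : DifferentiableOn ℂ (fun z : ℂ => z⁻¹) (interior K) := fun z hz =>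
    (differentiableAt_inv (ne_zero_of_mem_K (interior_subset hz))).differentiableWithinAt
  refine h.congr ?_
  intro z hz
  rw [extendFn_apply _ (interior_subset hz)]
  rfl

/-- Multiplication operator on `E` by a suitable function. -/
def mulOp (g : C(K,ℂ)) (hg : DifferentiableOn ℂ (extendFn g) (interior K)) : E →L[ℂ] E :=
  LinearMap.mkContinuous
    { toFun := fun f => ⟨g * f.1, mul_mem_Esub hg f.2⟩
      map_add' := by intro f₁ f₂; apply Subtype.ext; simp [mul_add]
      map_smul' := by intro c f; apply Subtype.ext; simp [mul_smul_comm] }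
    ‖g‖ (fun f => by exact norm_mul_le g f.1)

lemma mulOp_apply_coe (g : C(K,ℂ)) (hg) (f : E) :
    ((mulOp g hg f : E) : C(K,ℂ)) = g * f.1 := by
  rw [mulOp]
  rfl

/-- The operator `A` of multiplication by `z`. -/
def Aop : E →L[ℂ] E := mulOp zeta zeta_diff

lemma coe_sub_E (x y : E) : ((x - y : E) : C(K,ℂ)) = (x : C(K,ℂ)) - (y : C(K,ℂ)) := rfl

lemma Aop_sub_coe (f : E) : ((Aop f - f : E) : C(K,ℂ)) = zeta * f.1 - f.1 := by
  rw [coe_sub_E, show Aop = mulOp zeta zeta_diff from rfl, mulOp_apply_coe]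

lemma Aop_isUnit : IsUnit Aop := by
  have key : ∀ (g₁ g₂ : C(K,ℂ)) (hg₁ hg₂), (∀ z : K, g₁ z * g₂ z = 1) →
      mulOp g₁ hg₁ * mulOp g₂ hg₂ = 1 := by
    intro g₁ g₂ hg₁ hg₂ hprod
    apply ContinuousLinearMap.ext
    intro f
    apply Subtype.ext
    have h1 : (((mulOp g₁ hg₁ * mulOp g₂ hg₂) f : E) : C(K,ℂ)) = g₁ * (g₂ * f.1) := by
      rw [ContinuousLinearMap.mul_apply, mulOp_apply_coe, mulOp_apply_coe]
    rw [ContinuousLinearMap.one_apply, h1]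
    apply ContinuousMap.ext
    intro z
    have := hprod z
    simp only [ContinuousMap.mul_apply]
    rw [← mul_assoc, this, one_mul]
  have hzi : ∀ z : K, zeta z * iotaC z = 1 := by
    intro z
    exact mul_inv_cancel₀ (ne_zero_of_mem_K z.2)
  have hiz : ∀ z : K, iotaC z * zeta z = 1 := by
    intro z
    exact inv_mul_cancel₀ (ne_zero_of_mem_K z.2)
  exact ⟨⟨Aop, mulOp iotaC iota_diff, key _ _ _ _ hzi, key _ _ _ _ hiz⟩, rfl⟩

/-- The maximum modulus bound: `‖f‖ ≤ 2 ‖A f − f‖`. -/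
lemma norm_le_two_mul_norm (f : E) : ‖f‖ ≤ 2 * ‖Aop f - f‖ := by
  have hc : ContinuousOn (extendFn f.1) K := by
    rw [continuousOn_iff_continuous_restrict]
    have h : K.restrict (extendFn f.1) = fun z : K => f.1 z := by
      funext z
      exact extendFn_apply _ z.2
    convert f.1.continuous using 1
    exact h
  rw [norm_coe_E]
  refine (ContinuousMap.norm_le _ (by positivity)).mpr ?_
  intro x
  have hd : DiffContOnCl ℂ (extendFn f.1) (ball (1:ℂ) (1/2)) := by
    constructor
    · have h2 : DifferentiableOn ℂ (extendFn f.1) (interior K) := f.2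
      have : interior K = ball (1:ℂ) (1/2) := interior_closedBall 1 (by norm_num)
      rwa [this] at h2
    · rw [closure_ball 1 (by norm_num)]
      exact hc
  have hub : ∀ z ∈ frontier (ball (1:ℂ) (1/2)), ‖extendFn f.1 z‖ ≤ 2 * ‖Aop f - f‖ := by
    intro z hz
    rw [frontier_ball 1 (by norm_num)] at hz
    have hzK : z ∈ K := sphere_subset_closedBall hz
    have hdist : ‖z - 1‖ = 1/2 := by
      have : dist z 1 = 1/2 := hz
      rwa [dist_eq_norm] at this
    have h1 : ‖((Aop f - f : E) : C(K,ℂ)) ⟨z, hzK⟩‖ ≤ ‖Aop f - f‖ :=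
      ContinuousMap.norm_coe_le_norm _ _
    have h2 : ((Aop f - f : E) : C(K,ℂ)) ⟨z, hzK⟩ = (z - 1) * f.1 ⟨z, hzK⟩ := by
      rw [Aop_sub_coe]
      simp only [ContinuousMap.sub_apply, ContinuousMap.mul_apply]
      show (z : ℂ) * f.1 ⟨z, hzK⟩ - f.1 ⟨z, hzK⟩ = _
      ring
    rw [h2, norm_mul, hdist] at h1
    rw [extendFn_apply _ hzK]
    linarith
  have hmax := Complex.norm_le_of_forall_mem_frontier_norm_le isBounded_ball hd hub
    (show (x : ℂ) ∈ closure (ball (1:ℂ) (1/2)) by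
      rw [closure_ball 1 (by norm_num)]; exact x.2)
  rwa [extendFn_apply _ x.2] at hmax

set_option maxHeartbeats 1000000 in
/-- Hyperbolic invertible operators are not dense in the invertible operators on E:
there are an invertible A₀ and ε > 0 such that no hyperbolic invertible B
satisfies ‖A₀ − B‖ < ε. -/
theorem hyperbolic_not_dense :
    ∃ A₀ : E →L[ℂ] E, IsUnit A₀ ∧
      ∃ ε : ℝ, 0 < ε ∧
        ∀ B : E →L[ℂ] E, IsUnit B → Hyperbolic B → ¬ ‖A₀ - B‖ < ε := by
  refine ⟨Aop, Aop_isUnit, 1/4, by norm_num, ?_⟩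
  intro B _ hyp hlt
  -- 1 is not in the spectrum of B
  have h1spec : (1:ℂ) ∉ spectrum ℂ B := by
    intro hmem
    exact Set.disjoint_left.mp hyp hmem (by simp)
  have h1B : IsUnit ((1 : E →L[ℂ] E) - B) := by
    have := spectrum.notMem_iff.mp h1spec
    simpa using this
  obtain ⟨u, hu⟩ := h1B
  set f : E := (↑u⁻¹ : E →L[ℂ] E) oneE with hf
  have hinv : ((1 : E →L[ℂ] E) - B) f = oneE := by
    have h := u.mul_inv
    have h2 : (↑u * ↑u⁻¹ : E →L[ℂ] E) oneE = oneE := by rw [h]; simp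
    rw [ContinuousLinearMap.mul_apply] at h2
    rwa [hu] at h2
  have e1 : f - B f = oneE := by
    have := hinv
    simpa [ContinuousLinearMap.sub_apply] using this
  set g : E := (Aop - B) f with hg
  have hAf : Aop f - f = g - oneE := by
    rw [hg, ContinuousLinearMap.sub_apply, ← e1]
    abel
  have hnormone : ‖oneE‖ = 1 := by
    rw [norm_coe_E]
    exact norm_one
  have hgle : ‖g‖ ≤ ‖Aop - B‖ * ‖f‖ := (Aop - B).le_opNorm f
  have hABnn : (0:ℝ) ≤ ‖Aop - B‖ := ContinuousLinearMap.opNorm_nonneg _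
  have hABlt : ‖Aop - B‖ < 1/4 := hlt
  -- bound ‖f‖ ≤ 4
  have hfle : ‖f‖ ≤ 4 := by
    have h1 := norm_le_two_mul_norm f
    have h2 : ‖Aop f - f‖ ≤ ‖g‖ + ‖oneE‖ := by
      rw [hAf]; exact norm_sub_le _ _
    have h3 : ‖Aop - B‖ * ‖f‖ ≤ (1/4) * ‖f‖ :=
      mul_le_mul_of_nonneg_right (le_of_lt hABlt) (norm_nonneg f)
    linarith
  -- evaluation at 1
  have hval : ((g : E) : C(K,ℂ)) ⟨1, one_mem_K⟩ = 1 := by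
    have h0 : ((Aop f - f : E) : C(K,ℂ)) ⟨1, one_mem_K⟩ = 0 := by
      rw [Aop_sub_coe]
      simp only [ContinuousMap.sub_apply, ContinuousMap.mul_apply]
      show (1 : ℂ) * f.1 ⟨1, one_mem_K⟩ - f.1 ⟨1, one_mem_K⟩ = 0
      ring
    rw [hAf] at h0
    have : ((g : E) : C(K,ℂ)) ⟨1, one_mem_K⟩ - ((oneE : E) : C(K,ℂ)) ⟨1, one_mem_K⟩ = 0 := by
      simpa using h0
    have hone : ((oneE : E) : C(K,ℂ)) ⟨1, one_mem_K⟩ = 1 := rfl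
    rw [hone] at this
    linear_combination this
  have hg1 : (1:ℝ) ≤ ‖g‖ := by
    have := ContinuousMap.norm_coe_le_norm ((g : E) : C(K,ℂ)) ⟨1, one_mem_K⟩
    rw [hval] at this
    rw [norm_one, ← norm_coe_E] at this; exact this
  have h5 : ‖Aop - B‖ * ‖f‖ ≤ ‖Aop - B‖ * 4 := mul_le_mul_of_nonneg_left hfle hABnn
  have h6 : ‖Aop - B‖ * 4 < 1 := by linarith
  linarith

end
end
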